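/- In the 4-day Partition-reduction instance, if a set of schedules is 8B-equitable, then the total s-weight of item clients scheduled before client x on day 2 is exactly B. -/
import Mathlib

def Cg {α : Type} [DecidableEq α] [Fintype α] {M : ℕ} (pos : α ≃ Fin M)
    (p : α → ℕ) (c : α) : ℕ :=
  ∑ c' ∈ Finset.univ.filter (fun c' => pos c' ≤ pos c), p c'

def pRed (N B : ℕ) (s : Fin N → ℕ) : Fin 4 → (Fin N ⊕ Bool) → ℕ :=
  fun i c =>
    match c with
    | Sum.inl j => if i = 1 ∨ i = 3 then s j else 0
    | Sum.inr false => if i = 0 then 2 * B else if i = 1 then 5 * B else 0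
    | Sum.inr true => if i = 2 then 2 * B else if i = 3 then 5 * B else 0

lemma Cg_ge {α : Type} [DecidableEq α] [Fintype α] {M : ℕ} (pos : α ≃ Fin M)
    (p : α → ℕ) (c : α) (T : Finset α) (hT : ∀ a ∈ T, pos a ≤ pos c) :
    ∑ a ∈ T, p a ≤ Cg pos p c := by
  apply Finset.sum_le_sum_of_subset
  intro a ha
  simp only [Finset.mem_filter, Finset.mem_univ, true_and]
  exact hT a ha

lemma Cg_day_b (N B : ℕ) (s : Fin N → ℕ) (pos : (Fin N ⊕ Bool) ≃ Fin (N + 2))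
    (i : Fin 4) (b : Bool) (hi : i = 1 ∨ i = 3)
    (hpb : pRed N B s i (Sum.inr b) = 5 * B) (hpnb : pRed N B s i (Sum.inr (!b)) = 0) :
    Cg pos (pRed N B s i) (Sum.inr b) =
      5 * B + ∑ j ∈ Finset.univ.filter
        (fun j => pos (Sum.inl j) < pos (Sum.inr b)), s j := by
  unfold Cg
  rw [Finset.sum_filter, Finset.sum_filter, Fintype.sum_sum_type]
  have h1 : ∀ j : Fin N,
      (if pos (Sum.inl j) ≤ pos (Sum.inr b) then pRed N B s i (Sum.inl j) else 0)
      = (if pos (Sum.inl j) < pos (Sum.inr b) then s j else 0) := by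
    intro j
    have hne : pos (Sum.inl j) ≠ pos (Sum.inr b) := by
      simp [pos.injective.eq_iff]
    by_cases h : pos (Sum.inl j) ≤ pos (Sum.inr b)
    · rw [if_pos h, if_pos (lt_of_le_of_ne h hne)]
      simp [pRed, hi]
    · rw [if_neg h, if_neg (fun h' => h (le_of_lt h'))]
  rw [Finset.sum_congr rfl (fun j _ => h1 j)]
  have h2 : ∑ x : Bool, (if pos (Sum.inr x) ≤ pos (Sum.inr b) then pRed N B s i (Sum.inr x) else 0) = 5 * B := by
    rw [Fintype.sum_bool]
    cases b
    · simp only [Bool.not_false] at hpnb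
      rcases le_or_gt (pos (Sum.inr true)) (pos (Sum.inr false)) with h | h
      · simp [h, hpb, hpnb]
      · simp [not_le.mpr h, hpb]
    · simp only [Bool.not_true] at hpnb
      rcases le_or_gt (pos (Sum.inr false)) (pos (Sum.inr true)) with h | h
      · simp [h, hpb, hpnb]
      · simp [not_le.mpr h, hpb]
  omega

theorem stmt11 (N B : ℕ) (s : Fin N → ℕ) (hsum : ∑ j, s j = 2 * B)
    (σ : Fin 4 → ((Fin N ⊕ Bool) ≃ Fin (N + 2)))
    (heq : ∀ c, ∑ i, Cg (σ i) (pRed N B s i) c ≤ 8 * B) :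
    ∑ j ∈ Finset.univ.filter
        (fun j => (σ 1) (Sum.inl j) < (σ 1) (Sum.inr false)), s j = B := by
  set A : Finset (Fin N) := Finset.univ.filter
      (fun j => (σ 1) (Sum.inl j) < (σ 1) (Sum.inr false)) with hA
  set A' : Finset (Fin N) := Finset.univ.filter
      (fun j => (σ 3) (Sum.inl j) < (σ 3) (Sum.inr true)) with hA'
  -- Upper bound for W = ∑_A s
  have hx1 : Cg (σ 1) (pRed N B s 1) (Sum.inr false) = 5 * B + ∑ j ∈ A, s j := by
    apply Cg_day_b N B s (σ 1) 1 false (Or.inl rfl) <;> simp [pRed]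
  have hy3 : Cg (σ 3) (pRed N B s 3) (Sum.inr true) = 5 * B + ∑ j ∈ A', s j := by
    apply Cg_day_b N B s (σ 3) 3 true (Or.inr rfl) <;> simp [pRed]
  have hx0 : 2 * B ≤ Cg (σ 0) (pRed N B s 0) (Sum.inr false) := by
    have := Cg_ge (σ 0) (pRed N B s 0) (Sum.inr false) {Sum.inr false}
      (by intro a ha; simp_all)
    simpa [pRed] using this
  have hy2 : 2 * B ≤ Cg (σ 2) (pRed N B s 2) (Sum.inr true) := by
    have := Cg_ge (σ 2) (pRed N B s 2) (Sum.inr true) {Sum.inr true}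
      (by intro a ha; simp_all)
    simpa [pRed] using this
  have hsumx := heq (Sum.inr false)
  have hsumy := heq (Sum.inr true)
  rw [Fin.sum_univ_four] at hsumx hsumy
  have hWle : ∑ j ∈ A, s j ≤ B := by omega
  have hW'le : ∑ j ∈ A', s j ≤ B := by omega
  -- Lower bound: suppose ∑_A s < B, derive contradiction
  by_contra hne
  have hWlt : ∑ j ∈ A, s j < B := lt_of_le_of_ne hWle hne
  have hcomplA : ∑ j ∈ Aᶜ, s j = 2 * B - ∑ j ∈ A, s j := by
    have := Finset.sum_add_sum_compl A s
    omega
  have hcomplA' : ∑ j ∈ A'ᶜ, s j = 2 * B - ∑ j ∈ A', s j := by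
    have := Finset.sum_add_sum_compl A' s
    omega
  have hunion : ∑ j ∈ Aᶜ ∪ A'ᶜ, s j ≤ 2 * B := by
    rw [← hsum]
    exact Finset.sum_le_sum_of_subset (Finset.subset_univ _)
  have hinter : 0 < ∑ j ∈ Aᶜ ∩ A'ᶜ, s j := by
    have := Finset.sum_union_inter (s₁ := Aᶜ) (s₂ := A'ᶜ) (f := s)
    omega
  obtain ⟨j, hjmem, hjs⟩ := Finset.exists_ne_zero_of_sum_ne_zero (by omega :
    ∑ j ∈ Aᶜ ∩ A'ᶜ, s j ≠ 0)
  rw [Finset.mem_inter, Finset.mem_compl, Finset.mem_compl] at hjmem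
  obtain ⟨hjA, hjA'⟩ := hjmem
  have hj1 : (σ 1) (Sum.inr false) ≤ (σ 1) (Sum.inl j) := by
    have : ¬ (σ 1) (Sum.inl j) < (σ 1) (Sum.inr false) := by
      intro h; exact hjA (by simp [hA, h])
    omega
  have hj3 : (σ 3) (Sum.inr true) ≤ (σ 3) (Sum.inl j) := by
    have : ¬ (σ 3) (Sum.inl j) < (σ 3) (Sum.inr true) := by
      intro h; exact hjA' (by simp [hA', h])
    omega
  have hc1 : 5 * B + s j ≤ Cg (σ 1) (pRed N B s 1) (Sum.inl j) := by
    have hpair := Cg_ge (σ 1) (pRed N B s 1) (Sum.inl j) {Sum.inr false, Sum.inl j}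
      (by intro a ha
          simp only [Finset.mem_insert, Finset.mem_singleton] at ha
          rcases ha with rfl | rfl
          · exact hj1
          · exact le_refl _)
    rw [Finset.sum_pair (by simp)] at hpair
    simpa [pRed] using hpair
  have hc3 : 5 * B + s j ≤ Cg (σ 3) (pRed N B s 3) (Sum.inl j) := by
    have hpair := Cg_ge (σ 3) (pRed N B s 3) (Sum.inl j) {Sum.inr true, Sum.inl j}
      (by intro a ha
          simp only [Finset.mem_insert, Finset.mem_singleton] at ha
          rcases ha with rfl | rfl
          · exact hj3
          · exact le_refl _)
    rw [Finset.sum_pair (by simp)] at hpair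
    simpa [pRed] using hpair
  have hsumj := heq (Sum.inl j)
  rw [Fin.sum_univ_four] at hsumj
  omega
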